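/- Let ℓ₁, ℓ₂ be positive integers and define a linear functional 𝓛 on polynomials of degree at most ℓ₁+ℓ₂ by 𝓛(x^k) = Σ_{j=0}^{k} (-k)_j (-ℓ₁)_j 2^j / (j! (-ℓ₁-ℓ₂)_j). Then for every integer m with 0 ≤ m ≤ ℓ₁+ℓ₂, 𝓛(((1-x)/2)^m) = (-ℓ₁)_m / (-ℓ₁-ℓ₂)_m. -/

import Mathlib

/-- Pochhammer symbol `(a)_n = a(a+1)⋯(a+n-1)`. -/
def poch {R : Type*} [CommRing R] (a : R) (n : ℕ) : R :=
  ∏ i ∈ Finset.range n, (a + i)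

/-- The moments `𝓛(x^k)` of the linear functional `𝓛`. -/
def momL (l1 l2 : ℕ) (k : ℕ) : ℚ :=
  ∑ j ∈ Finset.range (k + 1),
    poch (-(k : ℚ)) j * poch (-(l1 : ℚ)) j * 2 ^ j /
      ((j.factorial : ℚ) * poch (-(l1 : ℚ) - (l2 : ℚ)) j)

lemma poch_succ {R : Type*} [CommRing R] (a : R) (n : ℕ) :
    poch a (n + 1) = poch a n * (a + n) := by
  simp [poch, Finset.prod_range_succ]

lemma poch_neg_nat (k : ℕ) : ∀ j : ℕ,
    poch (-(k : ℚ)) j = (-1) ^ j * j.factorial * (k.choose j)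
  | 0 => by simp [poch]
  | (j + 1) => by
    rw [poch_succ, poch_neg_nat k j]
    rcases lt_or_ge j k with h | h
    · have hc : (k.choose (j+1) : ℚ) * (j+1) = (k.choose j : ℚ) * ((k : ℚ) - j) := by
        calc (k.choose (j+1) : ℚ) * (j+1) = ((k.choose (j+1) * (j+1) : ℕ) : ℚ) := by
              push_cast; ring
          _ = ((k.choose j * (k - j) : ℕ) : ℚ) := by rw [Nat.choose_succ_right_eq]
          _ = (k.choose j : ℚ) * ((k : ℚ) - j) := by push_cast [Nat.cast_sub h.le]; ring
      rw [pow_succ, Nat.factorial_succ]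
      push_cast
      linear_combination ((-1 : ℚ)^j * j.factorial) * hc
    · rcases h.eq_or_lt with rfl | h'
      · rw [Nat.choose_succ_self]
        push_cast
        ring
      · simp [Nat.choose_eq_zero_of_lt h', Nat.choose_eq_zero_of_lt (Nat.lt_succ_of_lt h')]

lemma sum_choose_alt (m j : ℕ) (hj : j ≤ m) :
    ∑ k ∈ Finset.range (m+1), (m.choose k : ℚ) * (-1)^k * (k.choose j)
      = if j = m then (-1)^m else 0 := by
  have h1 : ∑ k ∈ Finset.range (m+1), (m.choose k : ℚ) * (-1)^k * (k.choose j)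
      = ∑ k ∈ Finset.Ico j (m+1), (m.choose k : ℚ) * (-1)^k * (k.choose j) := by
    refine (Finset.sum_subset ?_ ?_).symm
    · intro k hk
      simp only [Finset.mem_Ico] at hk
      simp only [Finset.mem_range]
      omega
    · intro k hk hk2
      simp only [Finset.mem_range] at hk
      simp only [Finset.mem_Ico] at hk2
      have hkj : k < j := by omega
      simp [Nat.choose_eq_zero_of_lt hkj]
  rw [h1, Finset.sum_Ico_eq_sum_range]
  have hmj : m + 1 - j = (m - j) + 1 := by omega
  rw [hmj]
  have h2 : ∀ i ∈ Finset.range (m - j + 1),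
      ((m.choose (j+i)) : ℚ) * (-1)^(j+i) * ((j+i).choose j)
        = ((m.choose j : ℚ) * (-1)^j) * ((-1)^i * ((m-j).choose i)) := by
    intro i hi
    simp only [Finset.mem_range] at hi
    have hkn : j + i ≤ m := by omega
    have h := Nat.choose_mul (n := m) (Nat.le_add_right j i)
    rw [Nat.add_sub_cancel_left] at h
    have h' : (m.choose (j+i) : ℚ) * ((j+i).choose j)
        = (m.choose j : ℚ) * ((m-j).choose i) := by exact_mod_cast congrArg Nat.cast h
    calc ((m.choose (j+i)) : ℚ) * (-1)^(j+i) * ((j+i).choose j)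
        = ((m.choose (j+i) : ℚ) * ((j+i).choose j)) * ((-1)^j * (-1)^i) := by
          rw [pow_add]; ring
      _ = ((m.choose j : ℚ) * ((m-j).choose i)) * ((-1)^j * (-1)^i) := by rw [h']
      _ = _ := by ring
  rw [Finset.sum_congr rfl h2, ← Finset.mul_sum]
  have h3 : ∑ i ∈ Finset.range (m-j+1), ((-1 : ℚ)^i * ((m-j).choose i))
      = if m - j = 0 then 1 else 0 := by
    have h := Int.alternating_sum_range_choose (n := m - j)
    have h' := congrArg (fun z : ℤ => (z : ℚ)) h
    push_cast at h'
    exact h'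
  rw [h3]
  by_cases hjm : j = m
  · subst hjm; simp
  · have hne : m - j ≠ 0 := by omega
    simp [hne, hjm]

theorem functional_moments (l1 l2 : ℕ) (h1 : 0 < l1) (h2 : 0 < l2) :
    ∀ m : ℕ, m ≤ l1 + l2 →
      (1 / 2 ^ m : ℚ) *
          ∑ k ∈ Finset.range (m + 1), (m.choose k : ℚ) * (-1) ^ k * momL l1 l2 k =
        poch (-(l1 : ℚ)) m / poch (-(l1 : ℚ) - (l2 : ℚ)) m := by
  intro m hm
  have hmom : ∀ k, k ≤ m → momL l1 l2 k = ∑ j ∈ Finset.range (m+1),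
      ((-1 : ℚ)^j * j.factorial * (k.choose j)) * poch (-(l1 : ℚ)) j * 2^j /
        ((j.factorial : ℚ) * poch (-(l1 : ℚ) - (l2 : ℚ)) j) := by
    intro k hk
    rw [momL]
    have e1 : ∀ j ∈ Finset.range (k+1),
        poch (-(k : ℚ)) j * poch (-(l1 : ℚ)) j * 2^j /
          ((j.factorial : ℚ) * poch (-(l1 : ℚ) - (l2 : ℚ)) j)
        = ((-1 : ℚ)^j * j.factorial * (k.choose j)) * poch (-(l1 : ℚ)) j * 2^j /
          ((j.factorial : ℚ) * poch (-(l1 : ℚ) - (l2 : ℚ)) j) := by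
      intro j _
      rw [poch_neg_nat]
    rw [Finset.sum_congr rfl e1]
    refine Finset.sum_subset ?_ ?_
    · exact Finset.range_subset_range.2 (by omega)
    · intro j hj hj2
      simp only [Finset.mem_range] at hj hj2
      have hkj : k < j := by omega
      simp [Nat.choose_eq_zero_of_lt hkj]
  have step1 : ∑ k ∈ Finset.range (m + 1), (m.choose k : ℚ) * (-1) ^ k * momL l1 l2 k
      = ∑ k ∈ Finset.range (m+1), ∑ j ∈ Finset.range (m+1),
          ((m.choose k : ℚ) * (-1)^k * (k.choose j)) *
            ((-1 : ℚ)^j * j.factorial * poch (-(l1 : ℚ)) j * 2^j /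
              ((j.factorial : ℚ) * poch (-(l1 : ℚ) - (l2 : ℚ)) j)) := by
    refine Finset.sum_congr rfl fun k hk => ?_
    simp only [Finset.mem_range] at hk
    rw [hmom k (by omega), Finset.mul_sum]
    exact Finset.sum_congr rfl fun j _ => by ring
  rw [step1, Finset.sum_comm]
  have step2 : ∀ j ∈ Finset.range (m+1),
      ∑ k ∈ Finset.range (m+1), ((m.choose k : ℚ) * (-1)^k * (k.choose j)) *
            ((-1 : ℚ)^j * j.factorial * poch (-(l1 : ℚ)) j * 2^j /
              ((j.factorial : ℚ) * poch (-(l1 : ℚ) - (l2 : ℚ)) j))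
      = if j = m then ((-1 : ℚ)^m) * ((-1 : ℚ)^j * j.factorial * poch (-(l1 : ℚ)) j * 2^j /
              ((j.factorial : ℚ) * poch (-(l1 : ℚ) - (l2 : ℚ)) j)) else 0 := by
    intro j hj
    simp only [Finset.mem_range] at hj
    rw [← Finset.sum_mul, sum_choose_alt m j (by omega)]
    by_cases hjm : j = m
    · simp [hjm]
    · simp [hjm]
  rw [Finset.sum_congr rfl step2, Finset.sum_ite_eq' (Finset.range (m+1)) m]
  simp only [Finset.mem_range, Nat.lt_succ_self, lt_add_iff_pos_right, Nat.lt_one_iff,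
    if_true, if_pos (Nat.lt_succ_self m)]
  have hpow : ((-1 : ℚ)^m) * (-1 : ℚ)^m = 1 := by
    rw [← pow_add]
    exact Even.neg_one_pow ⟨m, rfl⟩
  have hF : ((m.factorial : ℚ)) ≠ 0 := by exact_mod_cast m.factorial_ne_zero
  have h2m : (2 : ℚ)^m ≠ 0 := pow_ne_zero _ two_ne_zero
  rcases eq_or_ne (poch (-(l1 : ℚ) - (l2 : ℚ)) m) 0 with hP | hP
  · simp [hP]
  · field_simp
    linear_combination (poch (-(l1 : ℚ)) m) * hpow
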